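/- For every r > 0 there exists a point x in the upper half-plane ℍ² such that the Cassinian ball B_{c_{ℍ²}}(x, r) is not convex; in fact, for x = (0, 1/r) the points y₁ = (0, 1/(2r)) and y₂ = (2/r, 1/r) satisfy c_{ℍ²}(x,y₁) = c_{ℍ²}(x,y₂) = r while the midpoint y₃ = (1/r, 3/(4r)) satisfies c_{ℍ²}(x, y₃) > r. -/

import Mathlib

open Metric Set

/-- The Cassinian metric of a planar domain `D ⊆ ℂ`:
`c_D(x,y) = sup_{p ∈ ∂D} |x-y| / (|x-p| |p-y|)`. -/
noncomputable def cassinianC (D : Set ℂ) (x y : ℂ) : ℝ :=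
  ⨆ p ∈ frontier D, dist x y / (dist x p * dist p y)

private lemma frontierH : frontier {z : ℂ | 0 < z.im} = {z : ℂ | z.im = 0} := by
  have h1 : {z : ℂ | 0 < z.im} = Complex.im ⁻¹' Ioi 0 := rfl
  rw [h1, Complex.frontier_preimage_im, frontier_Ioi]
  rfl

private lemma dist_c (x y : ℂ) :
    dist x y = Real.sqrt ((x.re - y.re) ^ 2 + (x.im - y.im) ^ 2) := by
  rw [Complex.dist_eq, Complex.norm_def, Complex.normSq_apply]
  congr 1
  simp [Complex.sub_re, Complex.sub_im]
  ring

private lemma sqrt_div_le {A B C v : ℝ} (hA : 0 ≤ A) (hB : 0 < B) (hC : 0 < C) (hv : 0 ≤ v)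
    (h : A ≤ v ^ 2 * (B * C)) : Real.sqrt A / (Real.sqrt B * Real.sqrt C) ≤ v := by
  rw [← Real.sqrt_mul hB.le, div_le_iff₀ (Real.sqrt_pos.mpr (mul_pos hB hC))]
  calc Real.sqrt A ≤ Real.sqrt (v ^ 2 * (B * C)) := Real.sqrt_le_sqrt h
    _ = v * Real.sqrt (B * C) := by
        rw [Real.sqrt_mul (sq_nonneg v), Real.sqrt_sq hv]

private lemma sqrt_div_eq {A B C v : ℝ} (hB : 0 < B) (hC : 0 < C) (hv : 0 ≤ v)
    (h : A = v ^ 2 * (B * C)) : Real.sqrt A / (Real.sqrt B * Real.sqrt C) = v := by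
  subst h
  rw [← Real.sqrt_mul hB.le, Real.sqrt_mul (sq_nonneg v), Real.sqrt_sq hv, mul_div_assoc,
    div_self (Real.sqrt_pos.mpr (mul_pos hB hC)).ne', mul_one]

private lemma lt_sqrt_div {A B C v : ℝ} (hB : 0 < B) (hC : 0 < C) (hv : 0 ≤ v)
    (h : v ^ 2 * (B * C) < A) : v < Real.sqrt A / (Real.sqrt B * Real.sqrt C) := by
  rw [← Real.sqrt_mul hB.le, lt_div_iff₀ (Real.sqrt_pos.mpr (mul_pos hB hC))]
  calc v * Real.sqrt (B * C) = Real.sqrt (v ^ 2 * (B * C)) := by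
        rw [Real.sqrt_mul (sq_nonneg v), Real.sqrt_sq hv]
    _ < Real.sqrt A := Real.sqrt_lt_sqrt (by positivity) h

private lemma cass_le (x y : ℂ) {v : ℝ} (hv : 0 ≤ v)
    (hub : ∀ p : ℂ, p.im = 0 → dist x y / (dist x p * dist p y) ≤ v) :
    cassinianC {z : ℂ | 0 < z.im} x y ≤ v := by
  rw [cassinianC, frontierH]
  exact Real.iSup_le (fun p => Real.iSup_le (fun hp => hub p hp) hv) hv

private lemma le_cass (x y : ℂ) (hx : x.im ≠ 0) (hy : y.im ≠ 0) (p₀ : ℂ) (hp₀ : p₀.im = 0) :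
    dist x y / (dist x p₀ * dist p₀ y) ≤ cassinianC {z : ℂ | 0 < z.im} x y := by
  rw [cassinianC, frontierH]
  have hbdd : BddAbove (range fun p : ℂ => ⨆ _ : p ∈ {z : ℂ | z.im = 0},
      dist x y / (dist x p * dist p y)) := by
    refine ⟨dist x y / (|x.im| * |y.im|), ?_⟩
    rintro _ ⟨p, rfl⟩
    refine Real.iSup_le (fun hp => ?_) (by positivity)
    have h1 : |x.im| ≤ dist x p := by
      have := Complex.abs_im_le_norm (x - p)
      rwa [Complex.sub_im, hp, sub_zero, ← Complex.dist_eq] at this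
    have h2 : |y.im| ≤ dist p y := by
      have := Complex.abs_im_le_norm (p - y)
      rwa [Complex.sub_im, hp, zero_sub, abs_neg, ← Complex.dist_eq] at this
    refine div_le_div_of_nonneg_left dist_nonneg ?_ ?_
    · positivity
    · exact mul_le_mul h1 h2 (abs_nonneg _) dist_nonneg
  have hp₀' : p₀ ∈ {z : ℂ | z.im = 0} := hp₀
  have key : dist x y / (dist x p₀ * dist p₀ y)
      = ⨆ _ : p₀ ∈ {z : ℂ | z.im = 0}, dist x y / (dist x p₀ * dist p₀ y) :=
    (ciSup_pos (f := fun _ : p₀ ∈ {z : ℂ | z.im = 0} =>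
      dist x y / (dist x p₀ * dist p₀ y)) hp₀').symm
  rw [key]
  exact le_ciSup hbdd p₀

set_option maxHeartbeats 2000000 in
theorem cassinianBall_halfPlane_not_convex (r : ℝ) (hr : 0 < r) :
    let H : Set ℂ := {z : ℂ | 0 < z.im}
    let x : ℂ := Complex.I / r
    let y₁ : ℂ := Complex.I / (2 * r)
    let y₂ : ℂ := (2 + Complex.I) / r
    let y₃ : ℂ := (y₁ + y₂) / 2
    cassinianC H x y₁ = r ∧ cassinianC H x y₂ = r ∧ r < cassinianC H x y₃ ∧
      ¬ Convex ℝ {y ∈ H | cassinianC H x y < r} := by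
  intro H x y₁ y₂ y₃
  have hr0 : r ≠ 0 := hr.ne'
  have hxre : x.re = 0 := by
    simp [x, Complex.div_re, Complex.normSq_apply]
  have hxim : x.im = 1 / r := by
    simp [x, Complex.div_im, Complex.normSq_apply]
    try ring
  have hy1re : y₁.re = 0 := by
    simp [y₁, Complex.div_re, Complex.normSq_apply]
  have hy1im : y₁.im = 1 / (2 * r) := by
    simp [y₁, Complex.div_im, Complex.normSq_apply]
    try ring
  have hy2re : y₂.re = 2 / r := by
    simp [y₂, Complex.div_re, Complex.normSq_apply]
    field_simp
    try ring
  have hy2im : y₂.im = 1 / r := by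
    simp [y₂, Complex.div_im, Complex.normSq_apply]
    try ring
  have hy3re : y₃.re = 1 / r := by
    have h : y₃.re = (y₁.re + y₂.re) / 2 := by
      simp [y₃, Complex.div_re, Complex.normSq_apply, Complex.add_re]
      try ring
    rw [h, hy1re, hy2re]; ring
  have hy3im : y₃.im = 3 / (4 * r) := by
    have h : y₃.im = (y₁.im + y₂.im) / 2 := by
      simp [y₃, Complex.div_im, Complex.normSq_apply, Complex.add_im]
      try ring
    rw [h, hy1im, hy2im]; field_simp; ring
  have hximne : x.im ≠ 0 := by rw [hxim]; positivity
  -- part 1 : cassinianC H x y₁ = r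
  have part1 : cassinianC H x y₁ = r := by
    refine le_antisymm ?_ ?_
    · refine cass_le x y₁ hr.le fun p hp => ?_
      rw [dist_c x y₁, dist_c x p, dist_c p y₁, hp, hxre, hxim, hy1re, hy1im]
      have eB : ((0:ℝ) - p.re) ^ 2 + (1 / r - 0) ^ 2 = p.re ^ 2 + (1 / r) ^ 2 := by ring
      have eC : (p.re - 0) ^ 2 + ((0:ℝ) - 1 / (2 * r)) ^ 2
          = p.re ^ 2 + (1 / (2 * r)) ^ 2 := by ring
      rw [eB, eC]
      refine sqrt_div_le (by positivity) (by positivity) (by positivity) hr.le ?_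
      have key : r ^ 2 * ((p.re ^ 2 + (1 / r) ^ 2) * (p.re ^ 2 + (1 / (2 * r)) ^ 2))
          - (((0:ℝ) - 0) ^ 2 + (1 / r - 1 / (2 * r)) ^ 2)
          = r ^ 2 * p.re ^ 4 + (5 / 4) * p.re ^ 2 := by field_simp; try ring
      have hterm : (0:ℝ) ≤ r ^ 2 * p.re ^ 4 + (5 / 4) * p.re ^ 2 := by positivity
      linarith
    · have h0 : (0 : ℂ).im = 0 := rfl
      refine le_trans (le_of_eq ?_) (le_cass x y₁ hximne (by rw [hy1im]; positivity) 0 h0)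
      rw [dist_c x y₁, dist_c x 0, dist_c 0 y₁, Complex.zero_re, Complex.zero_im,
        hxre, hxim, hy1re, hy1im]
      have eB : ((0:ℝ) - 0) ^ 2 + (1 / r - 0) ^ 2 = (1 / r) ^ 2 := by ring
      have eC : ((0:ℝ) - 0) ^ 2 + ((0:ℝ) - 1 / (2 * r)) ^ 2 = (1 / (2 * r)) ^ 2 := by ring
      rw [eB, eC]
      refine (sqrt_div_eq (by positivity) (by positivity) hr.le ?_).symm
      field_simp
      try ring
  -- part 2 : cassinianC H x y₂ = r
  have part2 : cassinianC H x y₂ = r := by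
    refine le_antisymm ?_ ?_
    · refine cass_le x y₂ hr.le fun p hp => ?_
      rw [dist_c x y₂, dist_c x p, dist_c p y₂, hp, hxre, hxim, hy2re, hy2im]
      have eB : ((0:ℝ) - p.re) ^ 2 + (1 / r - 0) ^ 2 = p.re ^ 2 + (1 / r) ^ 2 := by ring
      have eC : (p.re - 2 / r) ^ 2 + ((0:ℝ) - 1 / r) ^ 2
          = (p.re - 2 / r) ^ 2 + (1 / r) ^ 2 := by ring
      rw [eB, eC]
      refine sqrt_div_le (by positivity) (by positivity) (by positivity) hr.le ?_
      have key : r ^ 2 * ((p.re ^ 2 + (1 / r) ^ 2) * ((p.re - 2 / r) ^ 2 + (1 / r) ^ 2))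
          - (((0:ℝ) - 2 / r) ^ 2 + (1 / r - 1 / r) ^ 2)
          = r ^ 2 * (p.re - 1 / r) ^ 4 := by field_simp; try ring
      have hterm : (0:ℝ) ≤ r ^ 2 * (p.re - 1 / r) ^ 4 := by positivity
      linarith
    · have h0 : ((1 / r : ℝ) : ℂ).im = 0 := Complex.ofReal_im _
      refine le_trans (le_of_eq ?_) (le_cass x y₂ hximne (by rw [hy2im]; positivity)
        ((1 / r : ℝ) : ℂ) h0)
      rw [dist_c x y₂, dist_c x _, dist_c _ y₂, Complex.ofReal_re, Complex.ofReal_im,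
        hxre, hxim, hy2re, hy2im]
      have eB : ((0:ℝ) - 1 / r) ^ 2 + (1 / r - 0) ^ 2 = (1 / r) ^ 2 + (1 / r) ^ 2 := by ring
      have eC : ((1:ℝ) / r - 2 / r) ^ 2 + ((0:ℝ) - 1 / r) ^ 2
          = (1 / r) ^ 2 + (1 / r) ^ 2 := by ring
      rw [eB, eC]
      refine (sqrt_div_eq (by positivity) (by positivity) hr.le ?_).symm
      field_simp
      try ring
  -- part 3 : r < cassinianC H x y₃
  have part3 : r < cassinianC H x y₃ := by
    have h0 : ((2 / (3 * r) : ℝ) : ℂ).im = 0 := Complex.ofReal_im _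
    refine lt_of_lt_of_le ?_ (le_cass x y₃ hximne (by rw [hy3im]; positivity)
      ((2 / (3 * r) : ℝ) : ℂ) h0)
    rw [dist_c x y₃, dist_c x _, dist_c _ y₃, Complex.ofReal_re, Complex.ofReal_im,
      hxre, hxim, hy3re, hy3im]
    have eB : ((0:ℝ) - 2 / (3 * r)) ^ 2 + (1 / r - 0) ^ 2
        = (2 / (3 * r)) ^ 2 + (1 / r) ^ 2 := by ring
    have eC : ((2:ℝ) / (3 * r) - 1 / r) ^ 2 + ((0:ℝ) - 3 / (4 * r)) ^ 2
        = (2 / (3 * r) - 1 / r) ^ 2 + (3 / (4 * r)) ^ 2 := by ring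
    rw [eB, eC]
    refine lt_sqrt_div (by positivity) (by positivity) hr.le ?_
    have key : (((0:ℝ) - 1 / r) ^ 2 + (1 / r - 3 / (4 * r)) ^ 2)
        - r ^ 2 * (((2 / (3 * r)) ^ 2 + (1 / r) ^ 2)
          * ((2 / (3 * r) - 1 / r) ^ 2 + (3 / (4 * r)) ^ 2))
        = 29 / (324 * r ^ 2) := by
      field_simp
      ring
    have hpos : (0:ℝ) < 29 / (324 * r ^ 2) := by positivity
    linarith
  refine ⟨part1, part2, part3, ?_⟩
  -- nonconvexity
  intro hconv
  set q₁ : ℂ := ((51 / (100 * r) : ℝ) : ℂ) * Complex.I with hq₁def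
  set q₂ : ℂ := ((199 / (100 * r) : ℝ) : ℂ) + ((1 / r : ℝ) : ℂ) * Complex.I with hq₂def
  have hq1re : q₁.re = 0 := by simp only [hq₁def, Complex.mul_re, Complex.mul_im, Complex.add_re, Complex.add_im, Complex.ofReal_re, Complex.ofReal_im, Complex.I_re, Complex.I_im, mul_zero, mul_one, zero_mul, sub_zero, zero_sub, add_zero, zero_add, neg_zero, neg_neg]
  have hq1im : q₁.im = 51 / (100 * r) := by simp only [hq₁def, Complex.mul_re, Complex.mul_im, Complex.add_re, Complex.add_im, Complex.ofReal_re, Complex.ofReal_im, Complex.I_re, Complex.I_im, mul_zero, mul_one, zero_mul, sub_zero, zero_sub, add_zero, zero_add, neg_zero, neg_neg]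
  have hq2re : q₂.re = 199 / (100 * r) := by simp only [hq₂def, Complex.mul_re, Complex.mul_im, Complex.add_re, Complex.add_im, Complex.ofReal_re, Complex.ofReal_im, Complex.I_re, Complex.I_im, mul_zero, mul_one, zero_mul, sub_zero, zero_sub, add_zero, zero_add, neg_zero, neg_neg]
  have hq2im : q₂.im = 1 / r := by simp only [hq₂def, Complex.mul_re, Complex.mul_im, Complex.add_re, Complex.add_im, Complex.ofReal_re, Complex.ofReal_im, Complex.I_re, Complex.I_im, mul_zero, mul_one, zero_mul, sub_zero, zero_sub, add_zero, zero_add, neg_zero, neg_neg]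
  have hq1mem : q₁ ∈ {y ∈ H | cassinianC H x y < r} := by
    refine ⟨by show 0 < q₁.im; rw [hq1im]; positivity, ?_⟩
    show cassinianC {z : ℂ | 0 < z.im} x q₁ < r
    have hub : cassinianC {z : ℂ | 0 < z.im} x q₁ ≤ 49 / 51 * r := by
      refine cass_le x q₁ (by positivity) fun p hp => ?_
      rw [dist_c x q₁, dist_c x p, dist_c p q₁, hp, hxre, hxim, hq1re, hq1im]
      have eB : ((0:ℝ) - p.re) ^ 2 + (1 / r - 0) ^ 2 = p.re ^ 2 + (1 / r) ^ 2 := by ring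
      have eC : (p.re - 0) ^ 2 + ((0:ℝ) - 51 / (100 * r)) ^ 2
          = p.re ^ 2 + (51 / (100 * r)) ^ 2 := by ring
      rw [eB, eC]
      refine sqrt_div_le (by positivity) (by positivity) (by positivity) (by positivity) ?_
      have key : (49 / 51 * r) ^ 2
            * ((p.re ^ 2 + (1 / r) ^ 2) * (p.re ^ 2 + (51 / (100 * r)) ^ 2))
          - (((0:ℝ) - 0) ^ 2 + (1 / r - 51 / (100 * r)) ^ 2)
          = (49 / 51) ^ 2 * (r ^ 2 * p.re ^ 4 + (12601 / 10000) * p.re ^ 2) := by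
        field_simp; try ring
      have hterm : (0:ℝ) ≤ (49 / 51) ^ 2 * (r ^ 2 * p.re ^ 4 + (12601 / 10000) * p.re ^ 2) := by
        positivity
      linarith
    nlinarith
  have hq2mem : q₂ ∈ {y ∈ H | cassinianC H x y < r} := by
    refine ⟨by show 0 < q₂.im; rw [hq2im]; positivity, ?_⟩
    show cassinianC {z : ℂ | 0 < z.im} x q₂ < r
    have hub : cassinianC {z : ℂ | 0 < z.im} x q₂ ≤ 79600 / 79601 * r := by
      refine cass_le x q₂ (by positivity) fun p hp => ?_
      rw [dist_c x q₂, dist_c x p, dist_c p q₂, hp, hxre, hxim, hq2re, hq2im]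
      have eB : ((0:ℝ) - p.re) ^ 2 + (1 / r - 0) ^ 2 = p.re ^ 2 + (1 / r) ^ 2 := by ring
      have eC : (p.re - 199 / (100 * r)) ^ 2 + ((0:ℝ) - 1 / r) ^ 2
          = (p.re - 199 / (100 * r)) ^ 2 + (1 / r) ^ 2 := by ring
      rw [eB, eC]
      refine sqrt_div_le (by positivity) (by positivity) (by positivity) (by positivity) ?_
      have key : (79600 / 79601 * r) ^ 2
            * ((p.re ^ 2 + (1 / r) ^ 2)
              * ((p.re - 199 / (100 * r)) ^ 2 + (1 / r) ^ 2))
          - (((0:ℝ) - 199 / (100 * r)) ^ 2 + (1 / r - 1 / r) ^ 2)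
          = (79600 / 79601) ^ 2 * r ^ 2 * ((p.re - 199 / (200 * r)) ^ 2
            * ((p.re - 199 / (200 * r)) ^ 2 + 399 / (20000 * r ^ 2))) := by
        field_simp
        ring
      have hterm : (0:ℝ) ≤ (79600 / 79601) ^ 2 * r ^ 2 * ((p.re - 199 / (200 * r)) ^ 2
          * ((p.re - 199 / (200 * r)) ^ 2 + 399 / (20000 * r ^ 2))) := by positivity
      linarith
    nlinarith
  have hmid := hconv hq1mem hq2mem (by norm_num : (0:ℝ) ≤ 1/2)
    (by norm_num : (0:ℝ) ≤ 1/2) (by norm_num)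
  set m : ℂ := (1 / 2 : ℝ) • q₁ + (1 / 2 : ℝ) • q₂ with hmdef
  have hmre : m.re = 199 / (200 * r) := by
    rw [hmdef, Complex.add_re, Complex.smul_re, Complex.smul_re, hq1re, hq2re,
      smul_eq_mul, smul_eq_mul]
    ring
  have hmim : m.im = 151 / (200 * r) := by
    rw [hmdef, Complex.add_im, Complex.smul_im, Complex.smul_im, hq1im, hq2im,
      smul_eq_mul, smul_eq_mul]
    ring
  have hmlt : cassinianC {z : ℂ | 0 < z.im} x m < r := hmid.2
  have hmgt : r < cassinianC {z : ℂ | 0 < z.im} x m := by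
    have h0 : ((2 / (3 * r) : ℝ) : ℂ).im = 0 := Complex.ofReal_im _
    refine lt_of_lt_of_le ?_ (le_cass x m hximne (by rw [hmim]; positivity)
      ((2 / (3 * r) : ℝ) : ℂ) h0)
    rw [dist_c x m, dist_c x _, dist_c _ m, Complex.ofReal_re, Complex.ofReal_im,
      hxre, hxim, hmre, hmim]
    have eB : ((0:ℝ) - 2 / (3 * r)) ^ 2 + (1 / r - 0) ^ 2
        = (2 / (3 * r)) ^ 2 + (1 / r) ^ 2 := by ring
    have eC : ((2:ℝ) / (3 * r) - 199 / (200 * r)) ^ 2 + ((0:ℝ) - 151 / (200 * r)) ^ 2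
        = (2 / (3 * r) - 199 / (200 * r)) ^ 2 + (151 / (200 * r)) ^ 2 := by ring
    rw [eB, eC]
    refine lt_sqrt_div (by positivity) (by positivity) hr.le ?_
    have key : (((0:ℝ) - 199 / (200 * r)) ^ 2 + (1 / r - 151 / (200 * r)) ^ 2)
        - r ^ 2 * (((2 / (3 * r)) ^ 2 + (1 / r) ^ 2)
          * ((2 / (3 * r) - 199 / (200 * r)) ^ 2 + (151 / (200 * r)) ^ 2))
        = 28741 / (405000 * r ^ 2) := by
      field_simp
      ring
    have hpos : (0:ℝ) < 28741 / (405000 * r ^ 2) := by positivity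
    linarith
  linarith
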